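/- Let μ be a Borel measure on (0,∞) with ∫_{(0,∞)} min(x, x²) μ(dx) < ∞, γ ≥ 0, ψ₀(θ) = γ²θ² + ∫_{(0,∞)} (e^{−θx} − 1 + θx) μ(dx), and Φ(θ) = ψ₀(θ)/θ for θ > 0. Then for every λ > 0, the following equalities hold as (possibly infinite) values in [0,∞]: ∫_0^∞ Φ(λ e^{−y}) dy = ∫_0^λ Φ(θ)/θ dθ = γ²λ + ∫_{(0,∞)} x · g(λx) μ(dx), where g(x) = ∫_0^x (e^{−y} − 1 + y)/y² dy for x ≥ 0. -/

import Mathlib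

open Real MeasureTheory

lemma aux_nonneg (t : ℝ) : 0 ≤ Real.exp (-t) - 1 + t := by
  nlinarith [Real.add_one_le_exp (-t)]

lemma aux_le_min {t : ℝ} (ht : 0 ≤ t) : Real.exp (-t) - 1 + t ≤ min t (t ^ 2) := by
  rcases le_total t 1 with h | h
  · have habs : |Real.exp (-t) - 1 - (-t)| ≤ (-t) ^ 2 :=
      Real.abs_exp_sub_one_sub_id_le (by rwa [abs_neg, abs_of_nonneg ht])
    rw [abs_le] at habs
    have h1 : Real.exp (-t) - 1 + t ≤ t ^ 2 := by nlinarith [habs.2]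
    have h2 : Real.exp (-t) ≤ 1 := Real.exp_le_one_iff.mpr (by linarith)
    exact le_min (by linarith) h1
  · have h2 : Real.exp (-t) ≤ 1 := Real.exp_le_one_iff.mpr (by linarith)
    have : min t (t ^ 2) = t := min_eq_left (by nlinarith)
    rw [this]; linarith

lemma aux_min_scale {a x : ℝ} (ha : 0 ≤ a) (hx : 0 ≤ x) :
    min (a * x) ((a * x) ^ 2) ≤ (a + a ^ 2) * min x (x ^ 2) := by
  rcases le_total x 1 with h | h
  · have hr : min x (x ^ 2) = x ^ 2 := min_eq_right (by nlinarith)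
    rw [hr]
    calc min (a * x) ((a * x) ^ 2) ≤ (a * x) ^ 2 := min_le_right _ _
      _ ≤ (a + a ^ 2) * x ^ 2 := by nlinarith
  · have hr : min x (x ^ 2) = x := min_eq_left (by nlinarith)
    rw [hr]
    calc min (a * x) ((a * x) ^ 2) ≤ a * x := min_le_left _ _
      _ ≤ (a + a ^ 2) * x := by nlinarith

lemma aux_sigmaFinite (μ : Measure ℝ)
    (hμ : IntegrableOn (fun x => min x (x ^ 2)) (Set.Ioi 0) μ) :
    SigmaFinite (μ.restrict (Set.Ioi (0:ℝ))) := by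
  refine ⟨⟨⟨fun n => {x | ((n : ℝ) + 1)⁻¹ ≤ min x (x ^ 2)} ∪ Set.Iic 0,
    fun _ => Set.mem_univ _, ?_, ?_⟩⟩⟩
  · intro n
    have h1 : μ.restrict (Set.Ioi (0:ℝ)) {x | ((n : ℝ) + 1)⁻¹ ≤ min x (x ^ 2)} < ⊤ :=
      hμ.measure_ge_lt_top (by positivity)
    have h2 : μ.restrict (Set.Ioi (0:ℝ)) (Set.Iic 0) = 0 := by
      rw [Measure.restrict_apply measurableSet_Iic]
      have : Set.Iic (0:ℝ) ∩ Set.Ioi 0 = ∅ := by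
        ext x; simp only [Set.mem_inter_iff, Set.mem_Iic, Set.mem_Ioi, Set.mem_empty_iff_false,
          iff_false, not_and, not_lt]
        intro h; exact h
      rw [this, measure_empty]
    calc μ.restrict (Set.Ioi (0:ℝ)) ({x | ((n : ℝ) + 1)⁻¹ ≤ min x (x ^ 2)} ∪ Set.Iic 0)
        ≤ _ + _ := measure_union_le _ _
      _ < ⊤ := by rw [h2]; simpa using h1
  · apply Set.eq_univ_iff_forall.mpr
    intro x
    rcases le_or_gt x 0 with h | h
    · exact Set.mem_iUnion.2 ⟨0, Or.inr h⟩
    · have hm : 0 < min x (x ^ 2) := lt_min h (by positivity)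
      obtain ⟨n, hn⟩ := exists_nat_one_div_lt hm
      refine Set.mem_iUnion.2 ⟨n, Or.inl ?_⟩
      rw [Set.mem_setOf_eq, inv_eq_one_div]
      linarith

lemma aux_integrable (μ : Measure ℝ)
    (hμ : IntegrableOn (fun x => min x (x ^ 2)) (Set.Ioi 0) μ) {θ : ℝ} (hθ : 0 ≤ θ) :
    IntegrableOn (fun x => Real.exp (-θ * x) - 1 + θ * x) (Set.Ioi 0) μ := by
  have hb : IntegrableOn (fun x => (θ + θ ^ 2) * min x (x ^ 2)) (Set.Ioi 0) μ := hμ.const_mul _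
  refine hb.mono' (Continuous.aestronglyMeasurable (by continuity)) ?_
  rw [ae_restrict_iff' measurableSet_Ioi]
  filter_upwards with x hx
  have hx0 : (0:ℝ) ≤ x := (le_of_lt hx)
  have h0 : 0 ≤ Real.exp (-θ * x) - 1 + θ * x := by
    rw [neg_mul]; exact aux_nonneg (θ * x)
  rw [Real.norm_eq_abs, abs_of_nonneg h0, neg_mul]
  calc Real.exp (-(θ * x)) - 1 + θ * x ≤ min (θ * x) ((θ * x) ^ 2) :=
        aux_le_min (mul_nonneg hθ hx0)
    _ ≤ (θ + θ ^ 2) * min x (x ^ 2) := aux_min_scale hθ hx0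

lemma aux_B (μ : Measure ℝ) (γ : ℝ)
    (hμ : IntegrableOn (fun x => min x (x ^ 2)) (Set.Ioi 0) μ) {θ : ℝ} (hθ : 0 < θ) :
    ENNReal.ofReal ((γ ^ 2 * θ ^ 2 +
        ∫ x in Set.Ioi (0:ℝ), (Real.exp (-θ * x) - 1 + θ * x) ∂μ) / θ / θ)
      = ENNReal.ofReal (γ ^ 2) +
        ∫⁻ x in Set.Ioi (0:ℝ), ENNReal.ofReal ((Real.exp (-θ * x) - 1 + θ * x) / θ ^ 2) ∂μ := by
  set I := ∫ x in Set.Ioi (0:ℝ), (Real.exp (-θ * x) - 1 + θ * x) ∂μ with hI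
  have hnn : ∀ x : ℝ, 0 ≤ Real.exp (-θ * x) - 1 + θ * x := fun x => by
    rw [neg_mul]; exact aux_nonneg (θ * x)
  have hI0 : 0 ≤ I := setIntegral_nonneg measurableSet_Ioi fun x _ => hnn x
  have hIof : ENNReal.ofReal I =
      ∫⁻ x in Set.Ioi (0:ℝ), ENNReal.ofReal (Real.exp (-θ * x) - 1 + θ * x) ∂μ :=
    ofReal_integral_eq_lintegral_ofReal (aux_integrable μ hμ hθ.le)
      (Filter.Eventually.of_forall hnn)
  have hexpr : (γ ^ 2 * θ ^ 2 + I) / θ / θ = γ ^ 2 + I * (θ ^ 2)⁻¹ := by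
    have hθ2 : (θ:ℝ) ^ 2 ≠ 0 := by positivity
    rw [div_div, ← pow_two, add_div, mul_div_assoc, div_self hθ2, mul_one, div_eq_mul_inv]
  rw [hexpr, ENNReal.ofReal_add (sq_nonneg γ) (mul_nonneg hI0 (by positivity))]
  congr 1
  have hsplit : ENNReal.ofReal (I * (θ ^ 2)⁻¹) = ENNReal.ofReal (θ ^ 2)⁻¹ * ENNReal.ofReal I := by
    rw [mul_comm I, ← ENNReal.ofReal_mul (by positivity)]
  rw [hsplit, hIof, ← lintegral_const_mul' _ _ ENNReal.ofReal_ne_top]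
  congr 1 with x
  rw [← ENNReal.ofReal_mul (by positivity : (0:ℝ) ≤ (θ ^ 2)⁻¹)]
  congr 1
  rw [div_eq_mul_inv, mul_comm]

lemma aux_inner (g : ℝ → ℝ)
    (hg : ∀ x, g x = ∫ y in (0:ℝ)..x, (Real.exp (-y) - 1 + y) / y ^ 2)
    {lam x : ℝ} (hlam : 0 < lam) (hx : 0 < x) :
    ∫⁻ θ in Set.Ioc (0:ℝ) lam, ENNReal.ofReal ((Real.exp (-θ * x) - 1 + θ * x) / θ ^ 2)
      = ENNReal.ofReal (x * g (lam * x)) := by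
  set q : ℝ → ℝ := fun y => (Real.exp (-y) - 1 + y) / y ^ 2 with hqdef
  set h : ℝ → ℝ := fun θ => (Real.exp (-θ * x) - 1 + θ * x) / θ ^ 2 with hhdef
  have hnn : ∀ θ, 0 ≤ h θ := fun θ =>
    div_nonneg (by rw [neg_mul]; exact aux_nonneg (θ * x)) (sq_nonneg _)
  have hmeas : Measurable h := by
    apply Measurable.div
    · fun_prop
    · fun_prop
  have hint : IntegrableOn h (Set.Ioc (0:ℝ) lam) := by
    refine Measure.integrableOn_of_bounded (M := x ^ 2) measure_Ioc_lt_top.ne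
      hmeas.aestronglyMeasurable ?_
    · rw [ae_restrict_iff' measurableSet_Ioc]
      filter_upwards with θ hθ
      rw [Real.norm_eq_abs, abs_of_nonneg (hnn θ)]
      have hb := le_trans (aux_le_min (mul_nonneg hθ.1.le hx.le)) (min_le_right _ _)
      show (Real.exp (-θ * x) - 1 + θ * x) / θ ^ 2 ≤ x ^ 2
      rw [neg_mul, div_le_iff₀ (pow_pos hθ.1 2)]
      nlinarith [hb]
  have key : ∫ θ in Set.Ioc (0:ℝ) lam, h θ = x * g (lam * x) := by
    rw [← intervalIntegral.integral_of_le hlam.le]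
    have hq : ∀ θ : ℝ, h θ = x ^ 2 * q (x * θ) := by
      intro θ
      by_cases hθ : θ = 0
      · simp [hθ, hhdef, hqdef]
      · show (Real.exp (-θ * x) - 1 + θ * x) / θ ^ 2
          = x ^ 2 * ((Real.exp (-(x * θ)) - 1 + x * θ) / (x * θ) ^ 2)
        rw [neg_mul, mul_comm θ x]
        field_simp
    have hcomp : (∫ θ in (0:ℝ)..lam, q (x * θ)) = x⁻¹ • ∫ y in (x*0)..(x*lam), q y :=
      intervalIntegral.integral_comp_mul_left q hx.ne'
    calc (∫ θ in (0:ℝ)..lam, h θ) = ∫ θ in (0:ℝ)..lam, x ^ 2 * q (x * θ) := by simp_rw [hq]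
      _ = x ^ 2 * ∫ θ in (0:ℝ)..lam, q (x * θ) := intervalIntegral.integral_const_mul _ _
      _ = x ^ 2 * (x⁻¹ * ∫ y in (0:ℝ)..(lam * x), q y) := by
          rw [hcomp]; rw [mul_zero, smul_eq_mul, mul_comm x lam]
      _ = x * g (lam * x) := by
          rw [hg (lam * x)]
          have : x ^ 2 * x⁻¹ = x := by field_simp [hx.ne']
          rw [← mul_assoc, this]
  rw [← key]
  exact (ofReal_integral_eq_lintegral_ofReal hint
    (Filter.Eventually.of_forall hnn)).symm

theorem stmt_13 (μ : Measure ℝ) (γ : ℝ) (hγ : 0 ≤ γ)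
    (hμ : IntegrableOn (fun x => min x (x ^ 2)) (Set.Ioi 0) μ)
    (ψ₀ Φ g : ℝ → ℝ)
    (hψ : ∀ θ, ψ₀ θ = γ ^ 2 * θ ^ 2 +
      ∫ x in Set.Ioi (0:ℝ), (Real.exp (-θ * x) - 1 + θ * x) ∂μ)
    (hΦ : ∀ θ > (0:ℝ), Φ θ = ψ₀ θ / θ)
    (hg : ∀ x, g x = ∫ y in (0:ℝ)..x, (Real.exp (-y) - 1 + y) / y ^ 2) :
    ∀ lam > (0:ℝ),
      (∫⁻ y in Set.Ioi (0:ℝ), ENNReal.ofReal (Φ (lam * Real.exp (-y)))) =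
        (∫⁻ θ in Set.Ioc (0:ℝ) lam, ENNReal.ofReal (Φ θ / θ)) ∧
      (∫⁻ θ in Set.Ioc (0:ℝ) lam, ENNReal.ofReal (Φ θ / θ)) =
        ENNReal.ofReal (γ ^ 2 * lam) +
          ∫⁻ x in Set.Ioi (0:ℝ), ENNReal.ofReal (x * g (lam * x)) ∂μ := by
  intro lam hlam
  constructor
  · -- change of variables θ = lam * exp (-y)
    have hderiv : ∀ y ∈ Set.Ioi (0:ℝ),
        HasFDerivWithinAt (fun y => lam * Real.exp (-y))
          ((1 : ℝ →L[ℝ] ℝ).smulRight (-(lam * Real.exp (-y)))) (Set.Ioi 0) y := by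
      intro y _
      have h1 : HasDerivAt (fun y : ℝ => lam * Real.exp (-y)) (-(lam * Real.exp (-y))) y := by
        have h2 : HasDerivAt (fun y : ℝ => Real.exp (-y)) (-Real.exp (-y)) y := by
          exact ((Real.hasDerivAt_exp (-y)).comp y (hasDerivAt_neg y)).congr_deriv (by simp)
        simpa [mul_comm, neg_mul, mul_neg] using h2.const_mul lam
      exact h1.hasFDerivAt.hasFDerivWithinAt
    have hinj : Set.InjOn (fun y => lam * Real.exp (-y)) (Set.Ioi (0:ℝ)) := by
      have hanti : StrictAntiOn (fun y => lam * Real.exp (-y)) (Set.Ioi (0:ℝ)) :=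
        fun a _ b _ hab =>
          mul_lt_mul_of_pos_left (Real.exp_lt_exp.2 (neg_lt_neg hab)) hlam
      exact hanti.injOn
    have himg : (fun y => lam * Real.exp (-y)) '' Set.Ioi (0:ℝ) = Set.Ioo 0 lam := by
      ext z
      constructor
      · rintro ⟨y, hy, rfl⟩
        constructor
        · positivity
        · have : Real.exp (-y) < 1 := Real.exp_lt_one_iff.mpr (by simpa using hy)
          calc lam * Real.exp (-y) < lam * 1 := by
                exact mul_lt_mul_of_pos_left this hlam
            _ = lam := mul_one lam
      · rintro ⟨hz0, hzlam⟩
        refine ⟨Real.log (lam / z), ?_, ?_⟩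
        · have : 1 < lam / z := (one_lt_div hz0).mpr hzlam
          exact Real.log_pos this
        · show lam * Real.exp (-Real.log (lam / z)) = z
          rw [← Real.log_inv, Real.exp_log (by positivity)]
          field_simp
    have hchange := lintegral_image_eq_lintegral_abs_det_fderiv_mul volume
      (measurableSet_Ioi (a := (0:ℝ))) hderiv hinj (fun θ => ENNReal.ofReal (Φ θ / θ))
    rw [himg] at hchange
    have hpt : ∀ y : ℝ,
        ENNReal.ofReal |((1 : ℝ →L[ℝ] ℝ).smulRight (-(lam * Real.exp (-y)))).det| *
            ENNReal.ofReal (Φ (lam * Real.exp (-y)) / (lam * Real.exp (-y)))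
          = ENNReal.ofReal (Φ (lam * Real.exp (-y))) := by
      intro y
      set a : ℝ := lam * Real.exp (-y) with ha
      have ha0 : 0 < a := by positivity
      rw [ContinuousLinearMap.det_smulRight, ContinuousLinearMap.one_apply, one_mul, abs_neg, abs_of_pos ha0]
      rcases le_or_gt (Φ a) 0 with h | h
      · have h2 : Φ a / a ≤ 0 := div_nonpos_iff.mpr (Or.inr ⟨h, ha0.le⟩)
        rw [ENNReal.ofReal_of_nonpos h2, ENNReal.ofReal_of_nonpos h, mul_zero]
      · rw [← ENNReal.ofReal_mul ha0.le]
        congr 1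
        field_simp
    calc (∫⁻ y in Set.Ioi (0:ℝ), ENNReal.ofReal (Φ (lam * Real.exp (-y))))
        = ∫⁻ y in Set.Ioi (0:ℝ),
            ENNReal.ofReal |((1 : ℝ →L[ℝ] ℝ).smulRight (-(lam * Real.exp (-y)))).det| *
              ENNReal.ofReal (Φ (lam * Real.exp (-y)) / (lam * Real.exp (-y))) :=
          (setLIntegral_congr_fun measurableSet_Ioi
            (fun y _ => (hpt y).symm))
      _ = ∫⁻ θ in Set.Ioo (0:ℝ) lam, ENNReal.ofReal (Φ θ / θ) := hchange.symm
      _ = ∫⁻ θ in Set.Ioc (0:ℝ) lam, ENNReal.ofReal (Φ θ / θ) :=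
          setLIntegral_congr Ioo_ae_eq_Ioc
  · haveI := aux_sigmaFinite μ hμ
    have hstep1 : (∫⁻ θ in Set.Ioc (0:ℝ) lam, ENNReal.ofReal (Φ θ / θ))
        = ∫⁻ θ in Set.Ioc (0:ℝ) lam, (ENNReal.ofReal (γ ^ 2) +
            ∫⁻ x in Set.Ioi (0:ℝ),
              ENNReal.ofReal ((Real.exp (-θ * x) - 1 + θ * x) / θ ^ 2) ∂μ) := by
      apply setLIntegral_congr_fun measurableSet_Ioc
      refine fun θ hθ => ?_
      beta_reduce
      rw [hΦ θ hθ.1, hψ θ, div_div]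
      rw [← div_div]
      exact aux_B μ γ hμ hθ.1
    have hFm : Measurable (Function.uncurry fun (θ x : ℝ) =>
        ENNReal.ofReal ((Real.exp (-θ * x) - 1 + θ * x) / θ ^ 2)) := by
      have : (Function.uncurry fun (θ x : ℝ) =>
          ENNReal.ofReal ((Real.exp (-θ * x) - 1 + θ * x) / θ ^ 2))
          = fun p : ℝ × ℝ =>
            ENNReal.ofReal ((Real.exp (-p.1 * p.2) - 1 + p.1 * p.2) / p.1 ^ 2) := rfl
      rw [this]
      apply Measurable.ennreal_ofReal
      fun_prop
    have hswap := lintegral_lintegral_swap (μ := volume.restrict (Set.Ioc (0:ℝ) lam))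
      (ν := μ.restrict (Set.Ioi (0:ℝ))) hFm.aemeasurable
    rw [hstep1, lintegral_add_left measurable_const, setLIntegral_const, hswap]
    congr 1
    · rw [Real.volume_Ioc, sub_zero, ← ENNReal.ofReal_mul (sq_nonneg γ)]
    · apply setLIntegral_congr_fun measurableSet_Ioi
      refine fun x hx => ?_
      exact aux_inner g hg hlam hx
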